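/- Fix 0 < δ < 1 and B > 0. Let h : ℝ → ℝ be a smooth function satisfying 0 ≤ h(τ) ≤ 1 for all τ, h(τ) = 1 for |τ| ≤ δ/2, and h(τ) = 0 for |τ| > δ, and set γ(τ) = h(τ) + τ·tanh(B·τ), a smooth strictly positive function on ℝ. Then for every real exponent p and every natural number k there exists a constant C = C(p,k) > 0 such that for all τ ∈ ℝ, |d^k/dτ^k (γ(τ)^p)| ≤ C·(1 + |τ|)^(p − k). (This is the one-dimensional radial form of the claim that γ^p(|ξ|) is a symbol of class S^p, Lemma on the family of operators G^p.) -/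

import Mathlib

namespace Stmt6Aux


lemma tanh_sq_id (x : ℝ) : 1 - Real.tanh x ^ 2 = 1 / Real.cosh x ^ 2 := by
  rw [Real.tanh_eq_sinh_div_cosh, div_pow]
  have h : Real.cosh x ^ 2 ≠ 0 := by positivity
  field_simp
  linarith [Real.cosh_sq x]

lemma hasDerivAt_tanh (x : ℝ) : HasDerivAt Real.tanh (1 - Real.tanh x ^ 2) x := by
  have h1 : HasDerivAt (fun y => Real.sinh y / Real.cosh y)
      ((Real.cosh x * Real.cosh x - Real.sinh x * Real.sinh x) / Real.cosh x ^ 2) x :=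
    (Real.hasDerivAt_sinh x).div (Real.hasDerivAt_cosh x) (Real.cosh_pos x).ne'
  have h2 : Real.tanh = fun y => Real.sinh y / Real.cosh y :=
    funext fun y => Real.tanh_eq_sinh_div_cosh y
  rw [tanh_sq_id, h2]
  convert h1 using 1
  have := Real.cosh_sq x
  field_simp
  nlinarith [Real.cosh_sq x]

lemma contDiff_tanh : ContDiff ℝ (⊤ : ℕ∞) Real.tanh := by
  have h2 : Real.tanh = fun y => Real.sinh y / Real.cosh y :=
    funext fun y => Real.tanh_eq_sinh_div_cosh y
  rw [h2]
  exact Real.contDiff_sinh.div Real.contDiff_cosh fun x => (Real.cosh_pos x).ne'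

lemma abs_tanh_le_one (x : ℝ) : |Real.tanh x| ≤ 1 := by
  rw [Real.tanh_eq_sinh_div_cosh, abs_div, abs_of_pos (Real.cosh_pos x),
    div_le_one (Real.cosh_pos x), abs_le]
  constructor
  · nlinarith [Real.cosh_add_sinh x, Real.exp_pos x]
  · nlinarith [Real.cosh_sub_sinh x, Real.exp_pos (-x)]

lemma tanh_mono {x y : ℝ} (hxy : x ≤ y) : Real.tanh x ≤ Real.tanh y := by
  have key : Real.tanh y - Real.tanh x
      = Real.sinh (y - x) / (Real.cosh x * Real.cosh y) := by
    rw [Real.tanh_eq_sinh_div_cosh, Real.tanh_eq_sinh_div_cosh, Real.sinh_sub,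
      div_sub_div _ _ (Real.cosh_pos y).ne' (Real.cosh_pos x).ne']
    rw [mul_comm (Real.cosh y) (Real.cosh x)]
  have h1 : 0 ≤ Real.sinh (y - x) := Real.sinh_nonneg_iff.mpr (by linarith)
  have h2 : 0 < Real.cosh x * Real.cosh y := mul_pos (Real.cosh_pos x) (Real.cosh_pos y)
  nlinarith [div_nonneg h1 h2.le]

lemma tanh_pos {x : ℝ} (hx : 0 < x) : 0 < Real.tanh x := by
  rw [Real.tanh_eq_sinh_div_cosh]
  exact div_pos (Real.sinh_pos_iff.mpr hx) (Real.cosh_pos x)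

lemma sech_sq_le (x : ℝ) : 1 - Real.tanh x ^ 2 ≤ 4 * Real.exp (-(2 * |x|)) := by
  rw [tanh_sq_id]
  have h1 : Real.exp |x| / 2 ≤ Real.cosh x := by
    rw [← Real.cosh_abs, Real.cosh_eq]
    have := Real.exp_pos (-|x|)
    linarith
  have h2 : 0 < Real.exp |x| / 2 := by positivity
  have h3 : (Real.exp |x| / 2) ^ 2 ≤ Real.cosh x ^ 2 := by
    apply pow_le_pow_left₀ h2.le h1
  have h4 : (0:ℝ) < (Real.exp |x| / 2) ^ 2 := by positivity
  calc 1 / Real.cosh x ^ 2 ≤ 1 / (Real.exp |x| / 2) ^ 2 := by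
        apply one_div_le_one_div_of_le h4 h3
    _ = 4 * Real.exp (-(2 * |x|)) := by
        rw [div_pow, Real.exp_neg]
        rw [show (2:ℝ) * |x| = |x| + |x| by ring, Real.exp_add]
        field_simp
        ring
  


-- iteratedDeriv helpers
lemma itd_zero_fun (n : ℕ) : iteratedDeriv n (fun _ : ℝ => (0:ℝ)) = fun _ => 0 := by
  induction n with
  | zero => simp [iteratedDeriv_zero]
  | succ n ih => rw [iteratedDeriv_succ, ih]; simp

lemma itd_add {f g : ℝ → ℝ} (hf : ContDiff ℝ (⊤ : ℕ∞) f) (hg : ContDiff ℝ (⊤ : ℕ∞) g)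
    (n : ℕ) (x : ℝ) :
    iteratedDeriv n (fun t => f t + g t) x = iteratedDeriv n f x + iteratedDeriv n g x := by
  have h1 : (n : WithTop ℕ∞) ≤ ((⊤ : ℕ∞) : WithTop ℕ∞) := by exact_mod_cast le_top
  rw [← iteratedDerivWithin_univ, ← iteratedDerivWithin_univ, ← iteratedDerivWithin_univ]
  exact iteratedDerivWithin_add (Set.mem_univ x) uniqueDiffOn_univ
    ((hf.of_le h1).contDiffWithinAt) ((hg.of_le h1).contDiffWithinAt)

lemma itd_cmul {f : ℝ → ℝ} (hf : ContDiff ℝ (⊤ : ℕ∞) f) (c : ℝ) (n : ℕ) (x : ℝ) :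
    iteratedDeriv n (fun t => c * f t) x = c * iteratedDeriv n f x := by
  have h1 : (n : WithTop ℕ∞) ≤ ((⊤ : ℕ∞) : WithTop ℕ∞) := by exact_mod_cast le_top
  rw [← iteratedDerivWithin_univ, ← iteratedDerivWithin_univ]
  exact iteratedDerivWithin_const_mul (Set.mem_univ x) uniqueDiffOn_univ c
    ((hf.of_le h1).contDiffWithinAt)

-- polynomial structure of the derivatives of tanh
lemma tanh_structure (j : ℕ) : ∃ P : Polynomial ℝ, ∀ x,
    iteratedDeriv (j + 1) Real.tanh x = P.eval (Real.tanh x) * (1 - Real.tanh x ^ 2) := by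
  induction j with
  | zero =>
    refine ⟨1, fun x => ?_⟩
    rw [iteratedDeriv_one, (hasDerivAt_tanh x).deriv]
    simp
  | succ j ih =>
    obtain ⟨P, hP⟩ := ih
    refine ⟨Polynomial.derivative P * (1 - Polynomial.X ^ 2) - 2 * Polynomial.X * P,
      fun x => ?_⟩
    rw [iteratedDeriv_succ, funext hP]
    have hd : HasDerivAt (fun y => P.eval (Real.tanh y) * (1 - Real.tanh y ^ 2))
        (((Polynomial.derivative P * (1 - Polynomial.X ^ 2)
          - 2 * Polynomial.X * P).eval (Real.tanh x)) * (1 - Real.tanh x ^ 2)) x := by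
      have h1 : HasDerivAt (fun y => P.eval (Real.tanh y))
          ((Polynomial.derivative P).eval (Real.tanh x) * (1 - Real.tanh x ^ 2)) x :=
        (P.hasDerivAt (Real.tanh x)).comp x (hasDerivAt_tanh x)
      have h2 : HasDerivAt (fun y => 1 - Real.tanh y ^ 2)
          (-(2 * Real.tanh x * (1 - Real.tanh x ^ 2))) x := by
        have h3 : HasDerivAt (fun y => Real.tanh y ^ 2)
            (2 * Real.tanh x * (1 - Real.tanh x ^ 2)) x := by
          have := (hasDerivAt_tanh x).fun_pow 2
          exact this.congr_deriv (by ring)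
        simpa using (hasDerivAt_const x (1:ℝ)).fun_sub h3
      have := h1.fun_mul h2
      exact this.congr_deriv (by simp [Polynomial.eval_mul, Polynomial.eval_sub]; ring)
    exact hd.deriv

lemma tanh_deriv_bound (j : ℕ) : ∃ M, 0 < M ∧ ∀ x,
    |iteratedDeriv (j + 1) Real.tanh x| ≤ M * Real.exp (-(2 * |x|)) := by
  obtain ⟨P, hP⟩ := tanh_structure j
  obtain ⟨M, hM⟩ := (isCompact_Icc (a := (-1:ℝ)) (b := 1)).exists_bound_of_continuousOn
    (P.continuous_aeval.continuousOn)
  refine ⟨4 * (|M| + 1), by positivity, fun x => ?_⟩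
  rw [hP x]
  have ht : Real.tanh x ∈ Set.Icc (-1:ℝ) 1 := by
    have := abs_tanh_le_one x
    rw [abs_le] at this
    exact ⟨this.1, this.2⟩
  have h1 : |P.eval (Real.tanh x)| ≤ M := by
    have := hM _ ht
    simpa [Polynomial.aeval_def, Polynomial.eval₂_eq_eval_map] using this
  have h2 : 0 ≤ 1 - Real.tanh x ^ 2 := by
    have h6 := abs_tanh_le_one x
    have h7 : Real.tanh x ^ 2 ≤ 1 := by
      rw [← sq_abs]
      nlinarith [abs_nonneg (Real.tanh x)]
    linarith
  rw [abs_mul, abs_of_nonneg h2]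
  have h3 := sech_sq_le x
  have h4 : (0:ℝ) < Real.exp (-(2 * |x|)) := Real.exp_pos _
  have h5 : |P.eval (Real.tanh x)| ≤ |M| + 1 := by
    have := le_abs_self M
    linarith
  calc |P.eval (Real.tanh x)| * (1 - Real.tanh x ^ 2)
      ≤ (|M| + 1) * (4 * Real.exp (-(2 * |x|))) := by
        apply mul_le_mul h5 h3 h2 (by positivity)
    _ = 4 * (|M| + 1) * Real.exp (-(2 * |x|)) := by ring

-- polynomial × exponential bound
lemma poly_exp_bound (a : ℝ) (ha : 0 < a) (n : ℕ) : ∃ C, 0 < C ∧ ∀ x : ℝ, 0 ≤ x →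
    (1 + x) ^ n * Real.exp (-(a * x)) ≤ C := by
  refine ⟨(n.factorial : ℝ) * Real.exp a / a ^ n, by positivity, fun x hx => ?_⟩
  have key : (a * (1 + x)) ^ n / (n.factorial : ℝ) ≤ Real.exp (a * (1 + x)) := by
    have h0 : 0 ≤ a * (1 + x) := by positivity
    have h1 := Real.sum_le_exp_of_nonneg h0 (n + 1)
    have h2 : (a * (1 + x)) ^ n / (n.factorial : ℝ)
        ≤ ∑ i ∈ Finset.range (n + 1), (a * (1 + x)) ^ i / (i.factorial : ℝ) := by
      apply Finset.single_le_sum (f := fun i => (a * (1 + x)) ^ i / (i.factorial : ℝ))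
        (fun i _ => by positivity) (Finset.self_mem_range_succ n)
    exact h2.trans h1
  have hfact : (0:ℝ) < (n.factorial : ℝ) := by positivity
  have han : (0:ℝ) < a ^ n := by positivity
  have hexp : Real.exp (a * (1 + x)) = Real.exp a * Real.exp (a * x) := by
    rw [← Real.exp_add]; ring_nf
  have h3 : (1 + x) ^ n ≤ (n.factorial : ℝ) * Real.exp a * Real.exp (a * x) / a ^ n := by
    rw [mul_pow] at key
    rw [div_le_iff₀ hfact] at key
    rw [le_div_iff₀ han]
    calc (1 + x) ^ n * a ^ n = a ^ n * (1 + x) ^ n := by ring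
      _ ≤ Real.exp (a * (1 + x)) * (n.factorial : ℝ) := key
      _ = (n.factorial : ℝ) * Real.exp a * Real.exp (a * x) := by rw [hexp]; ring
  have h4 : (0:ℝ) < Real.exp (a * x) := Real.exp_pos _
  rw [Real.exp_neg]
  rw [show (1+x)^n * (Real.exp (a*x))⁻¹ = (1+x)^n / Real.exp (a*x) by ring]
  rw [div_le_iff₀ h4]
  calc (1 + x) ^ n ≤ (n.factorial : ℝ) * Real.exp a * Real.exp (a * x) / a ^ n := h3
    _ = (n.factorial : ℝ) * Real.exp a / a ^ n * Real.exp (a * x) := by ring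



-- monotone uniformization
lemma unif {Q : ℕ → ℝ → Prop} (mono : ∀ j C C', C ≤ C' → Q j C → Q j C') (k : ℕ)
    (H : ∀ j, j ≤ k → ∃ C, 0 < C ∧ Q j C) : ∃ C, 0 < C ∧ ∀ j, j ≤ k → Q j C := by
  induction k with
  | zero =>
    obtain ⟨C, hC, hQ⟩ := H 0 le_rfl
    exact ⟨C, hC, fun j hj => by rw [Nat.le_zero.mp hj]; exact hQ⟩
  | succ k ih =>
    obtain ⟨C, hC, hQ⟩ := ih fun j hj => H j (hj.trans (Nat.le_succ k))
    obtain ⟨C', hC', hQ'⟩ := H (k+1) le_rfl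
    refine ⟨max C C', lt_max_of_lt_left hC, fun j hj => ?_⟩
    rcases Nat.lt_succ_iff_lt_or_eq.mp (Nat.lt_succ_of_le hj) with h | h
    · exact mono j C _ (le_max_left _ _) (hQ j (Nat.lt_succ_iff.mp h))
    · rw [h]; exact mono (k+1) C' _ (le_max_right _ _) hQ'

lemma symbol_rpow (γ : ℝ → ℝ) (hγ : ContDiff ℝ (⊤ : ℕ∞) γ) (c : ℝ) (hc : 0 < c)
    (hlow : ∀ τ, c * (1 + |τ|) ≤ γ τ) (hup : ∀ τ, γ τ ≤ 1 + |τ|)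
    (hsym : ∀ m : ℕ, ∃ D, 0 < D ∧ ∀ τ, |iteratedDeriv m γ τ| ≤ D * (1 + |τ|) ^ ((1:ℝ) - m)) :
    ∀ (k : ℕ) (p : ℝ), ∃ C, 0 < C ∧ ∀ j, j ≤ k → ∀ τ,
      |iteratedDeriv j (fun τ => γ τ ^ p) τ| ≤ C * (1 + |τ|) ^ (p - (j:ℝ)) := by
  have hb : ∀ τ : ℝ, (0:ℝ) < 1 + |τ| := fun τ => by positivity
  have hb1 : ∀ τ : ℝ, (1:ℝ) ≤ 1 + |τ| := fun τ => by simp [abs_nonneg]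
  have hγpos : ∀ τ, 0 < γ τ := fun τ => lt_of_lt_of_le (by positivity) (hlow τ)
  -- base case, for arbitrary exponent
  have base : ∀ p : ℝ, ∃ C, 0 < C ∧ ∀ τ, (γ τ) ^ p ≤ C * (1 + |τ|) ^ p := by
    intro p
    rcases le_or_gt 0 p with hp | hp
    · refine ⟨1, one_pos, fun τ => ?_⟩
      rw [one_mul]
      exact Real.rpow_le_rpow (hγpos τ).le (hup τ) hp
    · refine ⟨c ^ p, Real.rpow_pos_of_pos hc p, fun τ => ?_⟩
      have h1 : (γ τ) ^ p ≤ (c * (1 + |τ|)) ^ p :=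
        Real.rpow_le_rpow_of_nonpos (by positivity) (hlow τ) hp.le
      rw [Real.mul_rpow hc.le (hb τ).le] at h1
      exact h1
  intro k
  induction k with
  | zero =>
    intro p
    obtain ⟨C, hC, hCb⟩ := base p
    refine ⟨C, hC, fun j hj τ => ?_⟩
    rw [Nat.le_zero.mp hj]
    rw [iteratedDeriv_zero]
    simp only [Nat.cast_zero, sub_zero]
    rw [abs_of_nonneg (Real.rpow_nonneg (hγpos τ).le p)]
    exact hCb τ
  | succ k IH =>
    intro p
    obtain ⟨C0, hC0, hC0b⟩ := IH p
    obtain ⟨C1, hC1, hC1b⟩ := IH (p - 1)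
    obtain ⟨D, hD, hDb⟩ : ∃ D, 0 < D ∧ ∀ i, i ≤ k + 1 → ∀ τ,
        |iteratedDeriv i γ τ| ≤ D * (1 + |τ|) ^ ((1:ℝ) - i) := by
      apply unif
      · intro j C C' hCC' hQ τ
        exact (hQ τ).trans (by
          apply mul_le_mul_of_nonneg_right hCC' (Real.rpow_nonneg (hb τ).le _))
      · intro j _
        exact hsym j
    -- smoothness facts
    have hγd : Differentiable ℝ γ := hγ.differentiable (by simp)
    have hu : ContDiff ℝ (⊤ : ℕ∞) (deriv γ) := (contDiff_infty_iff_deriv.mp hγ).2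
    have hv : ContDiff ℝ (⊤ : ℕ∞) (fun s => γ s ^ (p - 1)) :=
      hγ.rpow_const_of_ne fun s => (hγpos s).ne'
    have hw : ContDiff ℝ (⊤ : ℕ∞) (fun s => γ s ^ (p - 1) * deriv γ s) := hv.mul hu
    -- derivative identity
    have hderiv : deriv (fun s => γ s ^ p)
        = fun s => p * (γ s ^ (p - 1) * deriv γ s) := by
      funext s
      have h1 : HasDerivAt γ (deriv γ s) s := (hγd s).hasDerivAt
      have h2 := (h1.rpow_const (p := p) (Or.inl (hγpos s).ne')).deriv
      rw [h2]; ring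
    -- key bound for order k+1
    have key : ∀ τ, |iteratedDeriv (k+1) (fun s => γ s ^ p) τ|
        ≤ (|p| * (2 ^ k * (C1 * D))) * (1 + |τ|) ^ (p - ((k:ℝ) + 1)) := by
      intro τ
      rw [iteratedDeriv_succ', hderiv, itd_cmul hw p k τ, abs_mul]
      have hkle : ((k:ℕ) : WithTop ℕ∞) ≤ ((⊤ : ℕ∞) : WithTop ℕ∞) := by exact_mod_cast le_top
      have hleib := norm_iteratedFDeriv_mul_le (𝕜 := ℝ) hv hu τ hkle
      have hnorm : ∀ (n : ℕ) (f : ℝ → ℝ) (x : ℝ),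
          ‖iteratedFDeriv ℝ n f x‖ = |iteratedDeriv n f x| := by
        intro n f x
        rw [norm_iteratedFDeriv_eq_norm_iteratedDeriv, Real.norm_eq_abs]
      rw [hnorm] at hleib
      simp only [hnorm] at hleib
      have hsum : ∑ i ∈ Finset.range (k + 1), ((k.choose i : ℝ))
            * |iteratedDeriv i (fun s => γ s ^ (p-1)) τ| * |iteratedDeriv (k - i) (deriv γ) τ|
          ≤ ∑ i ∈ Finset.range (k + 1), ((k.choose i : ℝ)) * (C1 * D)
            * (1 + |τ|) ^ (p - ((k:ℝ) + 1)) := by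
        apply Finset.sum_le_sum
        intro i hi
        have hik : i ≤ k := Nat.lt_succ_iff.mp (Finset.mem_range.mp hi)
        have e1 : |iteratedDeriv i (fun s => γ s ^ (p-1)) τ|
            ≤ C1 * (1 + |τ|) ^ ((p-1) - (i:ℝ)) := hC1b i hik τ
        have e2 : |iteratedDeriv (k - i) (deriv γ) τ|
            ≤ D * (1 + |τ|) ^ ((1:ℝ) - ((k-i:ℕ)+1:ℕ)) := by
          rw [← iteratedDeriv_succ']
          exact hDb ((k-i)+1) (by omega) τ
        have e3 : (1 + |τ|) ^ ((p-1) - (i:ℝ)) * (1 + |τ|) ^ ((1:ℝ) - ((k-i:ℕ)+1:ℕ))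
            = (1 + |τ|) ^ (p - ((k:ℝ) + 1)) := by
          rw [← Real.rpow_add (hb τ)]
          congr 1
          have : ((k - i : ℕ) : ℝ) = (k : ℝ) - (i : ℝ) := by
            rw [Nat.cast_sub hik]
          push_cast [this]
          ring
        calc ((k.choose i : ℝ)) * |iteratedDeriv i (fun s => γ s ^ (p-1)) τ|
              * |iteratedDeriv (k - i) (deriv γ) τ|
            ≤ ((k.choose i : ℝ)) * (C1 * (1 + |τ|) ^ ((p-1) - (i:ℝ)))
              * (D * (1 + |τ|) ^ ((1:ℝ) - ((k-i:ℕ)+1:ℕ))) := by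
              apply mul_le_mul
              · exact mul_le_mul_of_nonneg_left e1 (by positivity)
              · exact e2
              · exact abs_nonneg _
              · positivity
          _ = ((k.choose i : ℝ)) * (C1 * D)
              * ((1 + |τ|) ^ ((p-1) - (i:ℝ)) * (1 + |τ|) ^ ((1:ℝ) - ((k-i:ℕ)+1:ℕ))) := by
              ring
          _ = ((k.choose i : ℝ)) * (C1 * D) * (1 + |τ|) ^ (p - ((k:ℝ) + 1)) := by
              rw [e3]
      have hchoose : ∑ i ∈ Finset.range (k + 1), ((k.choose i : ℝ)) * (C1 * D)
            * (1 + |τ|) ^ (p - ((k:ℝ) + 1))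
          = (2:ℝ) ^ k * (C1 * D) * (1 + |τ|) ^ (p - ((k:ℝ) + 1)) := by
        rw [← Finset.sum_mul, ← Finset.sum_mul, ← Nat.cast_sum, Nat.sum_range_choose]
        push_cast
        ring
      have := hleib.trans (hsum.trans_eq hchoose)
      calc |p| * |iteratedDeriv k (fun s => γ s ^ (p-1) * deriv γ s) τ|
          ≤ |p| * ((2:ℝ) ^ k * (C1 * D) * (1 + |τ|) ^ (p - ((k:ℝ) + 1))) :=
            mul_le_mul_of_nonneg_left this (abs_nonneg p)
        _ = (|p| * (2 ^ k * (C1 * D))) * (1 + |τ|) ^ (p - ((k:ℝ) + 1)) := by ring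
    refine ⟨max C0 (|p| * (2 ^ k * (C1 * D)) + 1), lt_max_of_lt_left hC0, fun j hj τ => ?_⟩
    rcases Nat.lt_succ_iff_lt_or_eq.mp (Nat.lt_succ_of_le hj) with hcase | hcase
    · calc |iteratedDeriv j (fun τ => γ τ ^ p) τ| ≤ C0 * (1 + |τ|) ^ (p - (j:ℝ)) :=
          hC0b j (Nat.lt_succ_iff.mp hcase) τ
        _ ≤ max C0 (|p| * (2 ^ k * (C1 * D)) + 1) * (1 + |τ|) ^ (p - (j:ℝ)) := by
          apply mul_le_mul_of_nonneg_right (le_max_left _ _) (Real.rpow_nonneg (hb τ).le _)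
    · rw [hcase]
      have := key τ
      have h9 : ((k:ℝ) + 1) = ((k+1 : ℕ) : ℝ) := by push_cast; ring
      rw [h9] at this
      calc |iteratedDeriv (k+1) (fun τ => γ τ ^ p) τ|
          ≤ (|p| * (2 ^ k * (C1 * D))) * (1 + |τ|) ^ (p - ((k+1:ℕ):ℝ)) := this
        _ ≤ max C0 (|p| * (2 ^ k * (C1 * D)) + 1) * (1 + |τ|) ^ (p - ((k+1:ℕ):ℝ)) := by
          apply mul_le_mul_of_nonneg_right _ (Real.rpow_nonneg (hb τ).le _)
          exact le_trans (by linarith) (le_max_right _ _)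



lemma exp_decay_bound (a : ℝ) (ha : 0 < a) (n : ℕ) : ∃ E, 0 < E ∧ ∀ τ : ℝ,
    Real.exp (-(a * |τ|)) ≤ E * (1 + |τ|) ^ (-(n : ℝ)) := by
  obtain ⟨C, hC, hCb⟩ := poly_exp_bound a ha n
  refine ⟨C, hC, fun τ => ?_⟩
  have hpow : (0:ℝ) < (1 + |τ|) ^ (n : ℕ) := by positivity
  rw [Real.rpow_neg (by positivity), Real.rpow_natCast, ← div_eq_mul_inv, le_div_iff₀ hpow]
  calc Real.exp (-(a * |τ|)) * (1 + |τ|) ^ n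
      = (1 + |τ|) ^ n * Real.exp (-(a * |τ|)) := by ring
    _ ≤ C := hCb |τ| (abs_nonneg τ)

lemma id_exp_decay_bound (a : ℝ) (ha : 0 < a) (n : ℕ) : ∃ E, 0 < E ∧ ∀ τ : ℝ,
    |τ| * Real.exp (-(a * |τ|)) ≤ E * (1 + |τ|) ^ (-(n : ℝ)) := by
  obtain ⟨C, hC, hCb⟩ := poly_exp_bound a ha (n + 1)
  refine ⟨C, hC, fun τ => ?_⟩
  have hpow : (0:ℝ) < (1 + |τ|) ^ (n : ℕ) := by positivity
  rw [Real.rpow_neg (by positivity), Real.rpow_natCast, ← div_eq_mul_inv, le_div_iff₀ hpow]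
  calc |τ| * Real.exp (-(a * |τ|)) * (1 + |τ|) ^ n
      ≤ (1 + |τ|) * Real.exp (-(a * |τ|)) * (1 + |τ|) ^ n := by
        apply mul_le_mul_of_nonneg_right _ (by positivity)
        apply mul_le_mul_of_nonneg_right _ (Real.exp_pos _).le
        linarith [abs_nonneg τ]
    _ = (1 + |τ|) ^ (n + 1) * Real.exp (-(a * |τ|)) := by ring
    _ ≤ C := hCb |τ| (abs_nonneg τ)

lemma itd_mul_id (t : ℝ → ℝ) (ht : ContDiff ℝ (⊤ : ℕ∞) t) (m : ℕ) :
    iteratedDeriv (m + 1) (fun τ => τ * t τ)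
      = fun τ => τ * iteratedDeriv (m + 1) t τ + ((m:ℝ) + 1) * iteratedDeriv m t τ := by
  have hdiff : ∀ j : ℕ, Differentiable ℝ (iteratedDeriv j t) := by
    intro j
    apply ht.differentiable_iteratedDeriv
    have h2 : ((j:ℕ∞) : WithTop ℕ∞) < ((⊤:ℕ∞) : WithTop ℕ∞) :=
      WithTop.coe_lt_coe.mpr (WithTop.coe_lt_top j)
    exact_mod_cast h2
  induction m with
  | zero =>
    funext τ
    rw [iteratedDeriv_one]
    have h1 : HasDerivAt (fun τ => τ * t τ) (1 * t τ + τ * deriv t τ) τ :=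
      (hasDerivAt_id τ).mul ((ht.differentiable (by simp)) τ).hasDerivAt
    rw [h1.deriv, iteratedDeriv_one, iteratedDeriv_zero]
    push_cast
    ring
  | succ m ih =>
    funext τ
    rw [iteratedDeriv_succ, ih]
    have hF : HasDerivAt (iteratedDeriv (m+1) t) (iteratedDeriv (m+2) t τ) τ := by
      have h5 := ((hdiff (m+1)) τ).hasDerivAt
      rwa [← iteratedDeriv_succ] at h5
    have hG : HasDerivAt (iteratedDeriv m t) (iteratedDeriv (m+1) t τ) τ := by
      have h5 := ((hdiff m) τ).hasDerivAt
      rwa [← iteratedDeriv_succ] at h5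
    have h1 : HasDerivAt
        (fun τ => τ * iteratedDeriv (m+1) t τ + ((m:ℝ)+1) * iteratedDeriv m t τ)
        ((1 * iteratedDeriv (m+1) t τ + τ * iteratedDeriv (m+2) t τ)
          + ((m:ℝ)+1) * iteratedDeriv (m+1) t τ) τ :=
      ((hasDerivAt_id τ).mul hF).add (hG.const_mul ((m:ℝ)+1))
    rw [h1.deriv]
    push_cast
    ring

lemma gamma_symbol (δ B : ℝ) (hδ0 : 0 < δ) (hB : 0 < B)
    (h : ℝ → ℝ) (hsmooth : ContDiff ℝ (⊤ : ℕ∞) h)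
    (h01 : ∀ τ, 0 ≤ h τ ∧ h τ ≤ 1)
    (hzero : ∀ τ, δ < |τ| → h τ = 0) :
    ∀ m : ℕ, ∃ D, 0 < D ∧ ∀ τ,
      |iteratedDeriv m (fun τ => h τ + τ * Real.tanh (B * τ)) τ|
        ≤ D * (1 + |τ|) ^ ((1:ℝ) - m) := by
  have hb : ∀ τ : ℝ, (0:ℝ) < 1 + |τ| := fun τ => by positivity
  set t : ℝ → ℝ := fun τ => Real.tanh (B * τ) with ht_def
  have ht : ContDiff ℝ (⊤ : ℕ∞) t :=
    contDiff_tanh.comp (contDiff_const.mul contDiff_id)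
  have hg : ContDiff ℝ (⊤ : ℕ∞) (fun τ => τ * t τ) := contDiff_id.mul ht
  have habs : ∀ τ : ℝ, -(2 * |B * τ|) = -(2 * B * |τ|) := fun τ => by
    rw [abs_mul, abs_of_pos hB]; ring
  have hitdt : ∀ (j : ℕ) (τ : ℝ),
      iteratedDeriv j t τ = B ^ j * iteratedDeriv j Real.tanh (B * τ) := by
    intro j τ
    have hcd : ContDiff ℝ (j : ℕ) Real.tanh := contDiff_tanh.of_le (by exact_mod_cast le_top)
    exact congrFun (iteratedDeriv_comp_const_mul hcd B) τ
  intro m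
  match m with
  | 0 =>
    refine ⟨1, one_pos, fun τ => ?_⟩
    rw [iteratedDeriv_zero]
    simp only [Nat.cast_zero, sub_zero, Real.rpow_one, one_mul]
    have h1 : |h τ| ≤ 1 := by
      rcases h01 τ with ⟨ha', hb'⟩
      rw [abs_of_nonneg ha']; exact hb'
    calc |h τ + τ * t τ| ≤ |h τ| + |τ * t τ| := abs_add_le _ _
      _ ≤ 1 + |τ| * 1 := by
        apply add_le_add h1
        rw [abs_mul]
        exact mul_le_mul_of_nonneg_left (abs_tanh_le_one _) (abs_nonneg τ)
      _ = 1 + |τ| := by ring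
  | (m' + 1) =>
    -- bound for h part
    obtain ⟨Dh, hDh, hDhb⟩ : ∃ Dh, 0 < Dh ∧ ∀ τ,
        |iteratedDeriv (m' + 1) h τ| ≤ Dh * (1 + |τ|) ^ ((1:ℝ) - (m' + 1 : ℕ)) := by
      have hcont : Continuous (iteratedDeriv (m' + 1) h) :=
        hsmooth.continuous_iteratedDeriv (m' + 1) (by exact_mod_cast le_top)
      obtain ⟨M, hM⟩ := (isCompact_Icc (a := -δ) (b := δ)).exists_bound_of_continuousOn
        hcont.continuousOn
      refine ⟨(|M| + 1) * (1 + δ) ^ (((m' + 1 : ℕ):ℝ) - 1), by positivity, fun τ => ?_⟩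
      rcases le_or_gt |τ| δ with hτ | hτ
      · have hmem : τ ∈ Set.Icc (-δ) δ := by
          rw [Set.mem_Icc]
          exact ⟨by linarith [(abs_le.mp hτ).1], (abs_le.mp hτ).2⟩
        have h1 : |iteratedDeriv (m' + 1) h τ| ≤ |M| + 1 := by
          have := hM τ hmem
          rw [Real.norm_eq_abs] at this
          linarith [le_abs_self M]
        have h2 : (1 + δ) ^ ((1:ℝ) - (m' + 1 : ℕ)) ≤ (1 + |τ|) ^ ((1:ℝ) - (m' + 1 : ℕ)) := by
          apply Real.rpow_le_rpow_of_nonpos (hb τ) (by linarith)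
          have : (1:ℝ) ≤ ((m' + 1 : ℕ):ℝ) := by exact_mod_cast Nat.one_le_iff_ne_zero.mpr (by omega)
          linarith
        have h3 : ((|M| + 1) * (1 + δ) ^ (((m' + 1 : ℕ):ℝ) - 1)) * (1 + δ) ^ ((1:ℝ) - (m' + 1 : ℕ))
            = |M| + 1 := by
          rw [mul_assoc, ← Real.rpow_add (by positivity)]
          norm_num
        calc |iteratedDeriv (m' + 1) h τ| ≤ |M| + 1 := h1
          _ = ((|M| + 1) * (1 + δ) ^ (((m' + 1 : ℕ):ℝ) - 1)) * (1 + δ) ^ ((1:ℝ) - (m' + 1 : ℕ)) :=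
            h3.symm
          _ ≤ ((|M| + 1) * (1 + δ) ^ (((m' + 1 : ℕ):ℝ) - 1)) * (1 + |τ|) ^ ((1:ℝ) - (m' + 1 : ℕ)) := by
            apply mul_le_mul_of_nonneg_left h2 (by positivity)
      · have hvanish : iteratedDeriv (m' + 1) h τ = 0 := by
          have hopen : IsOpen {s : ℝ | δ < |s|} := isOpen_lt continuous_const continuous_abs
          have hev : h =ᶠ[nhds τ] (fun _ => (0:ℝ)) :=
            Filter.eventuallyEq_of_mem (hopen.mem_nhds hτ) fun s hs => hzero s hs
          rw [hev.iteratedDeriv_eq (m' + 1), itd_zero_fun]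
        rw [hvanish]
        simp only [abs_zero]
        positivity
    -- bound for g part
    obtain ⟨Dg, hDg, hDgb⟩ : ∃ Dg, 0 < Dg ∧ ∀ τ,
        |iteratedDeriv (m' + 1) (fun τ => τ * t τ) τ| ≤ Dg * (1 + |τ|) ^ (-(m' : ℝ)) := by
      obtain ⟨M1, hM1, hM1b⟩ := tanh_deriv_bound m'
      obtain ⟨E1, hE1, hE1b⟩ := id_exp_decay_bound (2 * B) (by linarith) m'
      have hterm1 : ∀ τ : ℝ, |τ| * |iteratedDeriv (m' + 1) t τ|
          ≤ B ^ (m' + 1) * M1 * E1 * (1 + |τ|) ^ (-(m' : ℝ)) := by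
        intro τ
        have h1 : |iteratedDeriv (m' + 1) t τ| ≤ B ^ (m' + 1) * (M1 * Real.exp (-(2 * B * |τ|))) := by
          rw [hitdt (m' + 1) τ, abs_mul, abs_pow, abs_of_pos hB]
          apply mul_le_mul_of_nonneg_left _ (by positivity)
          have := hM1b (B * τ)
          rwa [habs τ] at this
        calc |τ| * |iteratedDeriv (m' + 1) t τ|
            ≤ |τ| * (B ^ (m' + 1) * (M1 * Real.exp (-(2 * B * |τ|)))) :=
              mul_le_mul_of_nonneg_left h1 (abs_nonneg τ)
          _ = B ^ (m' + 1) * M1 * (|τ| * Real.exp (-(2 * B * |τ|))) := by ring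
          _ ≤ B ^ (m' + 1) * M1 * (E1 * (1 + |τ|) ^ (-(m' : ℝ))) := by
              apply mul_le_mul_of_nonneg_left (hE1b τ) (by positivity)
          _ = B ^ (m' + 1) * M1 * E1 * (1 + |τ|) ^ (-(m' : ℝ)) := by ring
      obtain ⟨M2, hM2, hM2b⟩ : ∃ M2, 0 < M2 ∧ ∀ τ : ℝ,
          ((m':ℝ) + 1) * |iteratedDeriv m' t τ| ≤ M2 * (1 + |τ|) ^ (-(m' : ℝ)) := by
        match m' with
        | 0 =>
          refine ⟨1, one_pos, fun τ => ?_⟩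
          simp only [Nat.cast_zero, zero_add, one_mul, neg_zero, Real.rpow_zero, mul_one]
          rw [iteratedDeriv_zero]
          exact abs_tanh_le_one _
        | (m'' + 1) =>
          obtain ⟨M2', hM2', hM2b'⟩ := tanh_deriv_bound m''
          obtain ⟨E2, hE2, hE2b⟩ := exp_decay_bound (2 * B) (by linarith) (m'' + 1)
          refine ⟨(((m''+1:ℕ):ℝ) + 1) * B ^ (m''+1) * M2' * E2, by positivity, fun τ => ?_⟩
          have h1 : |iteratedDeriv (m''+1) t τ|
              ≤ B ^ (m''+1) * (M2' * Real.exp (-(2 * B * |τ|))) := by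
            rw [hitdt (m''+1) τ, abs_mul, abs_pow, abs_of_pos hB]
            apply mul_le_mul_of_nonneg_left _ (by positivity)
            have := hM2b' (B * τ)
            rwa [habs τ] at this
          calc (((m''+1:ℕ):ℝ) + 1) * |iteratedDeriv (m''+1) t τ|
              ≤ (((m''+1:ℕ):ℝ) + 1) * (B ^ (m''+1) * (M2' * Real.exp (-(2 * B * |τ|)))) := by
                apply mul_le_mul_of_nonneg_left h1 (by positivity)
            _ = (((m''+1:ℕ):ℝ) + 1) * B ^ (m''+1) * M2' * Real.exp (-(2 * B * |τ|)) := by ring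
            _ ≤ (((m''+1:ℕ):ℝ) + 1) * B ^ (m''+1) * M2' * (E2 * (1 + |τ|) ^ (-((m''+1:ℕ) : ℝ))) := by
                apply mul_le_mul_of_nonneg_left (hE2b τ) (by positivity)
            _ = (((m''+1:ℕ):ℝ) + 1) * B ^ (m''+1) * M2' * E2 * (1 + |τ|) ^ (-((m''+1:ℕ) : ℝ)) := by
                ring
      refine ⟨B ^ (m' + 1) * M1 * E1 + M2, by positivity, fun τ => ?_⟩
      rw [itd_mul_id t ht m']
      calc |τ * iteratedDeriv (m' + 1) t τ + ((m':ℝ) + 1) * iteratedDeriv m' t τ|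
          ≤ |τ * iteratedDeriv (m' + 1) t τ| + |((m':ℝ) + 1) * iteratedDeriv m' t τ| := abs_add_le _ _
        _ = |τ| * |iteratedDeriv (m' + 1) t τ| + ((m':ℝ) + 1) * |iteratedDeriv m' t τ| := by
            rw [abs_mul, abs_mul, abs_of_pos (by positivity : (0:ℝ) < (m':ℝ) + 1)]
        _ ≤ B ^ (m' + 1) * M1 * E1 * (1 + |τ|) ^ (-(m' : ℝ))
            + M2 * (1 + |τ|) ^ (-(m' : ℝ)) := add_le_add (hterm1 τ) (hM2b τ)
        _ = (B ^ (m' + 1) * M1 * E1 + M2) * (1 + |τ|) ^ (-(m' : ℝ)) := by ring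
    -- combine
    refine ⟨Dh + Dg, by positivity, fun τ => ?_⟩
    have hexp : ((1:ℝ) - ((m' + 1 : ℕ):ℝ)) = -(m' : ℝ) := by push_cast; ring
    rw [itd_add hsmooth hg (m' + 1) τ]
    calc |iteratedDeriv (m' + 1) h τ + iteratedDeriv (m' + 1) (fun τ => τ * t τ) τ|
        ≤ |iteratedDeriv (m' + 1) h τ| + |iteratedDeriv (m' + 1) (fun τ => τ * t τ) τ| :=
          abs_add_le _ _
      _ ≤ Dh * (1 + |τ|) ^ ((1:ℝ) - (m' + 1 : ℕ)) + Dg * (1 + |τ|) ^ (-(m' : ℝ)) :=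
          add_le_add (hDhb τ) (hDgb τ)
      _ = (Dh + Dg) * (1 + |τ|) ^ ((1:ℝ) - ((m' + 1 : ℕ):ℝ)) := by
          rw [hexp]; ring



lemma gamma_up (B : ℝ) (h : ℝ → ℝ) (h01 : ∀ τ, 0 ≤ h τ ∧ h τ ≤ 1) :
    ∀ τ : ℝ, h τ + τ * Real.tanh (B * τ) ≤ 1 + |τ| := by
  intro τ
  have h1 : τ * Real.tanh (B * τ) ≤ |τ| := by
    calc τ * Real.tanh (B * τ) ≤ |τ * Real.tanh (B * τ)| := le_abs_self _
      _ = |τ| * |Real.tanh (B * τ)| := abs_mul _ _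
      _ ≤ |τ| * 1 := mul_le_mul_of_nonneg_left (abs_tanh_le_one _) (abs_nonneg τ)
      _ = |τ| := mul_one _
  linarith [(h01 τ).2]

lemma self_mul_tanh (B : ℝ) (hB : 0 < B) (τ : ℝ) :
    τ * Real.tanh (B * τ) = |τ| * Real.tanh (B * |τ|) := by
  rcases le_or_gt 0 τ with hτ | hτ
  · rw [abs_of_nonneg hτ]
  · rw [abs_of_neg hτ]
    have : B * -τ = -(B * τ) := by ring
    rw [this, Real.tanh_neg]
    ring

lemma gamma_low (δ B : ℝ) (hδ0 : 0 < δ) (hδ1 : δ < 1) (hB : 0 < B)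
    (h : ℝ → ℝ) (h01 : ∀ τ, 0 ≤ h τ ∧ h τ ≤ 1)
    (hone : ∀ τ, |τ| ≤ δ / 2 → h τ = 1) :
    ∃ c, 0 < c ∧ ∀ τ : ℝ, c * (1 + |τ|) ≤ h τ + τ * Real.tanh (B * τ) := by
  have htp : 0 < Real.tanh (B * (δ / 2)) := tanh_pos (by positivity)
  refine ⟨min (1/2) (Real.tanh (B * (δ / 2)) * (δ / (2 + δ))), ?_, fun τ => ?_⟩
  · apply lt_min (by norm_num)
    positivity
  · have hnn : 0 ≤ τ * Real.tanh (B * τ) := by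
      rw [self_mul_tanh B hB τ]
      apply mul_nonneg (abs_nonneg τ)
      have := tanh_mono (show (0:ℝ) ≤ B * |τ| by positivity)
      rwa [Real.tanh_zero] at this
    rcases le_or_gt |τ| (δ / 2) with hτ | hτ
    · have h1 : h τ = 1 := hone τ hτ
      have h2 : min (1/2) (Real.tanh (B * (δ / 2)) * (δ / (2 + δ))) * (1 + |τ|)
          ≤ (1/2) * (1 + |τ|) :=
        mul_le_mul_of_nonneg_right (min_le_left _ _) (by positivity)
      have h3 : (1/2 : ℝ) * (1 + |τ|) ≤ 1 := by
        have : |τ| ≤ 1 := by linarith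
        linarith
      linarith
    · have h1 : h τ + τ * Real.tanh (B * τ) ≥ |τ| * Real.tanh (B * |τ|) := by
        rw [← self_mul_tanh B hB τ]
        linarith [(h01 τ).1]
      have h2 : Real.tanh (B * (δ / 2)) ≤ Real.tanh (B * |τ|) :=
        tanh_mono (by nlinarith)
      have h3 : δ / (2 + δ) * (1 + |τ|) ≤ |τ| := by
        rw [div_mul_eq_mul_div, div_le_iff₀ (by linarith)]
        nlinarith
      calc min (1/2) (Real.tanh (B * (δ / 2)) * (δ / (2 + δ))) * (1 + |τ|)
          ≤ Real.tanh (B * (δ / 2)) * (δ / (2 + δ)) * (1 + |τ|) :=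
            mul_le_mul_of_nonneg_right (min_le_right _ _) (by positivity)
        _ = Real.tanh (B * (δ / 2)) * (δ / (2 + δ) * (1 + |τ|)) := by ring
        _ ≤ Real.tanh (B * (δ / 2)) * |τ| := mul_le_mul_of_nonneg_left h3 htp.le
        _ ≤ Real.tanh (B * |τ|) * |τ| := mul_le_mul_of_nonneg_right h2 (abs_nonneg τ)
        _ = |τ| * Real.tanh (B * |τ|) := by ring
        _ ≤ h τ + τ * Real.tanh (B * τ) := h1

end Stmt6Aux


/-- One-dimensional radial symbol estimates of class `S^p` for powers of the
modified Dirichlet-to-Neumann symbol `γ(τ) = h(τ) + τ·tanh(B·τ)`: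
for every real `p` and every `k : ℕ` there is `C > 0` with
`|d^k/dτ^k (γ(τ)^p)| ≤ C (1 + |τ|)^(p-k)` for all `τ`. -/
theorem stmt_6 (δ B : ℝ) (hδ0 : 0 < δ) (hδ1 : δ < 1) (hB : 0 < B)
    (h : ℝ → ℝ) (hsmooth : ContDiff ℝ (⊤ : ℕ∞) h)
    (h01 : ∀ τ, 0 ≤ h τ ∧ h τ ≤ 1)
    (hone : ∀ τ, |τ| ≤ δ / 2 → h τ = 1)
    (hzero : ∀ τ, δ < |τ| → h τ = 0)
    (p : ℝ) (k : ℕ) :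
    ∃ C : ℝ, 0 < C ∧ ∀ τ : ℝ,
      |iteratedDeriv k (fun τ : ℝ => (h τ + τ * Real.tanh (B * τ)) ^ p) τ|
        ≤ C * (1 + |τ|) ^ (p - (k : ℝ)) := by
  obtain ⟨c, hc, hlow⟩ := Stmt6Aux.gamma_low δ B hδ0 hδ1 hB h h01 hone
  have hγ : ContDiff ℝ (⊤ : ℕ∞) (fun τ : ℝ => h τ + τ * Real.tanh (B * τ)) :=
    hsmooth.add (contDiff_id.mul
      (Stmt6Aux.contDiff_tanh.comp (contDiff_const.mul contDiff_id)))
  obtain ⟨C, hC, hCb⟩ := Stmt6Aux.symbol_rpow (fun τ : ℝ => h τ + τ * Real.tanh (B * τ))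
    hγ c hc hlow (Stmt6Aux.gamma_up B h h01)
    (Stmt6Aux.gamma_symbol δ B hδ0 hB h hsmooth h01 hzero) k p
  exact ⟨C, hC, fun τ => hCb k le_rfl τ⟩
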